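/- arXiv:1202.6221 — 3 statements merged into one kernel-verified Lean document; each statement's English description precedes it below -/
import Mathlib

section
/- (Step 2 of Lemma 1.) Fix a class q ∈ {1,…,Q} and an index i with y_i = q, and assume m_q ≥ 1. Let z ∈ 𝒵^m be a sample with label sequence y, z^{\i} the sample with the i-th example removed, and z^i the sample with (x_i, q) replaced by (x_i', q). Assume all loss functions ℓ_j take values in [0, M] and that the algorithm A satisfies sup_{x∈𝒳} ‖L(A_z, x, q) − L(A_{z^{\i}}, x, q)‖ ≤ B/m_q and sup_{x∈𝒳} ‖L(A_{z^i}, x, q) − L(A_{z^{\i}}, x, q)‖ ≤ B/m_q. Then the empirical class-q loss matrices L̂_q = (1/m_q) Σ_{k: y_k=q} L(A_z, x_k, q) and L̂_q^i = (1/m_q) Σ_{k: y_k=q, k≠i} L(A_{z^i}, x_k, q) + (1/m_q) L(A_{z^i}, x_i', q) satisfy ‖L̂_q − L̂_q^i‖ ≤ 2B/m_q + √Q·M/m_q. -/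
open Matrix MeasureTheory ENNReal

/-- The operator norm (largest singular value) of a real square matrix,
with respect to the Euclidean norm. -/
noncomputable def opNorm {n : Type*} [Fintype n] [DecidableEq n] (M : Matrix n n ℝ) : ℝ :=
  ‖Matrix.toEuclideanCLM (𝕜 := ℝ) M‖

/-- The loss matrix `L(h, x, y)` with entries `l_{ij} = ℓ_j(h, x, y)` if `i = y` and
`i ≠ j`, and `0` otherwise. -/
noncomputable def lossMatrix {𝒳 ℋ : Type*} {Q : ℕ} (ℓ : Fin Q → ℋ → 𝒳 → Fin Q → ℝ)
    (h : ℋ) (x : 𝒳) (y : Fin Q) : Matrix (Fin Q) (Fin Q) ℝ :=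
  Matrix.of fun i j => if i = y ∧ i ≠ j then ℓ j h x y else 0

set_option synthInstance.maxHeartbeats 1000000
set_option maxHeartbeats 1000000

lemma opNorm_add_le' {n : Type*} [Fintype n] [DecidableEq n] (A B : Matrix n n ℝ) :
    opNorm (A + B) ≤ opNorm A + opNorm B := by
  simp only [opNorm, map_add]; exact norm_add_le _ _

lemma opNorm_sub_le' {n : Type*} [Fintype n] [DecidableEq n] (A B : Matrix n n ℝ) :
    opNorm (A - B) ≤ opNorm A + opNorm B := by
  simp only [opNorm, map_sub]; exact norm_sub_le _ _

lemma opNorm_smul' {n : Type*} [Fintype n] [DecidableEq n] (c : ℝ) (A : Matrix n n ℝ) :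
    opNorm (c • A) = |c| * opNorm A := by
  have h : Matrix.toEuclideanCLM (𝕜 := ℝ) (c • A)
      = c • Matrix.toEuclideanCLM (𝕜 := ℝ) A := by
    ext v
    simp [Matrix.smul_mulVec]
  rw [opNorm, h, norm_smul c (Matrix.toEuclideanCLM (𝕜 := ℝ) A)]
  simp [opNorm]

lemma opNorm_sum_le' {n ι : Type*} [Fintype n] [DecidableEq n] (s : Finset ι)
    (f : ι → Matrix n n ℝ) : opNorm (∑ k ∈ s, f k) ≤ ∑ k ∈ s, opNorm (f k) := by
  simp only [opNorm, map_sum]; exact norm_sum_le _ _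

lemma opNorm_row_le {Q : ℕ} (q : Fin Q) (A : Matrix (Fin Q) (Fin Q) ℝ) (M : ℝ) (hM : 0 ≤ M)
    (h0 : ∀ i j, i ≠ q → A i j = 0) (hb : ∀ j, |A q j| ≤ M) :
    opNorm A ≤ Real.sqrt Q * M := by
  apply ContinuousLinearMap.opNorm_le_bound _ (by positivity)
  intro v
  set w := (Matrix.toEuclideanCLM (𝕜 := ℝ) A) v with hw
  have happ : ∀ i, w i = ∑ j, A i j * v j := by
    intro i
    have h2 : WithLp.equiv 2 (Fin Q → ℝ) w i
        = Matrix.toLin' A (WithLp.equiv 2 _ v) i := by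
      rw [hw]; exact congrFun (Matrix.ofLp_toEuclideanCLM A v) i
    simpa [Matrix.toLin'_apply, Matrix.mulVec, dotProduct] using h2
  have hnw : ‖w‖ = |w q| := by
    rw [EuclideanSpace.norm_eq]
    rw [Finset.sum_eq_single q]
    · simp [Real.sqrt_sq_eq_abs]
    · intro b _ hb'
      have : w b = 0 := by
        rw [happ]; apply Finset.sum_eq_zero; intro j _; rw [h0 b j hb', zero_mul]
      simp [this]
    · simp
  set u : EuclideanSpace ℝ (Fin Q) := (WithLp.equiv 2 _).symm (fun j => A q j) with hu
  have hwq : w q = (inner ℝ u v : ℝ) := by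
    rw [happ]
    simp [PiLp.inner_apply, hu, RCLike.inner_apply, mul_comm]
  have hcs : |w q| ≤ ‖u‖ * ‖v‖ := by rw [hwq]; exact abs_real_inner_le_norm u v
  have hnu : ‖u‖ ≤ Real.sqrt Q * M := by
    rw [EuclideanSpace.norm_eq]
    have : ∑ j, ‖u j‖ ^ 2 ≤ (Q : ℝ) * M ^ 2 := by
      calc ∑ j, ‖u j‖ ^ 2 ≤ ∑ _j : Fin Q, M ^ 2 := by
            apply Finset.sum_le_sum; intro j _
            have : ‖u j‖ = |A q j| := by simp [hu]
            rw [this]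
            exact pow_le_pow_left₀ (abs_nonneg _) (hb j) 2
        _ = (Q : ℝ) * M ^ 2 := by simp [mul_comm]
    calc Real.sqrt (∑ j, ‖u j‖ ^ 2) ≤ Real.sqrt ((Q : ℝ) * M ^ 2) := Real.sqrt_le_sqrt this
      _ = Real.sqrt Q * M := by
          rw [Real.sqrt_mul (Nat.cast_nonneg _), Real.sqrt_sq hM]
  calc ‖w‖ = |w q| := hnw
    _ ≤ ‖u‖ * ‖v‖ := hcs
    _ ≤ Real.sqrt Q * M * ‖v‖ := by
        apply mul_le_mul_of_nonneg_right hnu (norm_nonneg _)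

/-- **Step 2 of Lemma 1.** Under the stability hypotheses and with losses valued in
`[0, M]`, the empirical class-`q` loss matrices computed on `z` and on `z^i` (with the
`i`-th example replaced by `(x', q)`) differ by at most `2B/m_q + √Q·M/m_q` in
operator norm. -/
theorem statement6 {𝒳 ℋ : Type*} [MeasurableSpace 𝒳] {Q m : ℕ}
    (ℓ : Fin Q → ℋ → 𝒳 → Fin Q → ℝ)
    (A : List (𝒳 × Fin Q) → ℋ)
    (y : Fin m → Fin Q) (x : Fin m → 𝒳) (x' : 𝒳)
    (q : Fin Q) (i : Fin m) (hyi : y i = q)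
    (B : ℝ) (hB : 0 < B) (M : ℝ) (hM : 0 ≤ M)
    (hloss : ∀ (j : Fin Q) (h : ℋ) (x0 : 𝒳) (y0 : Fin Q), ℓ j h x0 y0 ∈ Set.Icc (0 : ℝ) M)
    (mq : ℕ) (hmq : mq = (Finset.univ.filter fun j => y j = q).card) (hmq1 : 1 ≤ mq)
    (z zi zbs : List (𝒳 × Fin Q))
    (hz : z = List.ofFn fun j => (x j, y j))
    (hzi : zi = z.set i (x', q))
    (hzbs : zbs = z.eraseIdx i)
    (hstab : ∀ x0 : 𝒳,
      opNorm (lossMatrix ℓ (A z) x0 q - lossMatrix ℓ (A zbs) x0 q) ≤ B / mq)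
    (hstab' : ∀ x0 : 𝒳,
      opNorm (lossMatrix ℓ (A zi) x0 q - lossMatrix ℓ (A zbs) x0 q) ≤ B / mq) :
    opNorm ((mq : ℝ)⁻¹ • ∑ k ∈ Finset.univ.filter (fun k => y k = q),
          lossMatrix ℓ (A z) (x k) q -
        (mq : ℝ)⁻¹ • ((∑ k ∈ (Finset.univ.filter fun k => y k = q).erase i,
          lossMatrix ℓ (A zi) (x k) q) + lossMatrix ℓ (A zi) x' q))
      ≤ 2 * B / mq + Real.sqrt Q * M / mq := by
  classical
  set S := Finset.univ.filter (fun k => y k = q) with hS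
  have hiS : i ∈ S := by simp [hS, hyi]
  set Lz : Fin m → Matrix (Fin Q) (Fin Q) ℝ := fun k => lossMatrix ℓ (A z) (x k) q with hLz
  set Li : Fin m → Matrix (Fin Q) (Fin Q) ℝ := fun k => lossMatrix ℓ (A zi) (x k) q with hLi
  set L' : Matrix (Fin Q) (Fin Q) ℝ := lossMatrix ℓ (A zi) x' q with hL'
  have hNpos : (0 : ℝ) < mq := by exact_mod_cast hmq1
  have hrw : (mq : ℝ)⁻¹ • ∑ k ∈ S, Lz k - (mq : ℝ)⁻¹ • ((∑ k ∈ S.erase i, Li k) + L')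
      = (mq : ℝ)⁻¹ • ((∑ k ∈ S.erase i, (Lz k - Li k)) + (Lz i - L')) := by
    rw [← smul_sub]
    congr 1
    rw [← Finset.add_sum_erase S Lz hiS, Finset.sum_sub_distrib]
    abel
  rw [hrw, opNorm_smul']
  have hterm : ∀ k ∈ S.erase i, opNorm (Lz k - Li k) ≤ 2 * B / mq := by
    intro k _
    have heq : Lz k - Li k = (lossMatrix ℓ (A z) (x k) q - lossMatrix ℓ (A zbs) (x k) q)
        - (lossMatrix ℓ (A zi) (x k) q - lossMatrix ℓ (A zbs) (x k) q) := by
      simp only [hLz, hLi]; abel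
    rw [heq]
    calc opNorm _ ≤ _ := opNorm_sub_le' _ _
      _ ≤ B / mq + B / mq := add_le_add (hstab (x k)) (hstab' (x k))
      _ = 2 * B / mq := by ring
  have hlast : opNorm (Lz i - L') ≤ Real.sqrt Q * M := by
    apply opNorm_row_le q _ M hM
    · intro i0 j hi0
      simp [hLz, hL', lossMatrix, hi0]
    · intro j
      by_cases hqj : q = j
      · simp [hLz, hL', lossMatrix, hqj, hM]
      · have h1 := hloss j (A z) (x i) q
        have h2 := hloss j (A zi) x' q
        simp only [hLz, hL', lossMatrix, Matrix.sub_apply, Matrix.of_apply, ne_eq, hqj,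
          not_false_iff, and_true, if_pos rfl, if_true, true_and]
        rw [abs_sub_le_iff]
        constructor <;> [skip; skip] <;>
          · simp only [Set.mem_Icc] at h1 h2; linarith [h1.1, h1.2, h2.1, h2.2]
  have hsumnorm : opNorm ((∑ k ∈ S.erase i, (Lz k - Li k)) + (Lz i - L'))
      ≤ ((mq : ℝ) - 1) * (2 * B / mq) + Real.sqrt Q * M := by
    calc opNorm _ ≤ opNorm (∑ k ∈ S.erase i, (Lz k - Li k)) + opNorm (Lz i - L') :=
          opNorm_add_le' _ _
      _ ≤ (∑ k ∈ S.erase i, opNorm (Lz k - Li k)) + opNorm (Lz i - L') := by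
          gcongr; exact opNorm_sum_le' _ _
      _ ≤ (∑ _k ∈ S.erase i, (2 * B / mq)) + Real.sqrt Q * M :=
          add_le_add (Finset.sum_le_sum hterm) hlast
      _ = ((mq : ℝ) - 1) * (2 * B / mq) + Real.sqrt Q * M := by
          rw [Finset.sum_const, Finset.card_erase_of_mem hiS, ← hmq, nsmul_eq_mul]
          congr 2
          rw [Nat.cast_sub hmq1]
          norm_num
  have habs : |(mq : ℝ)⁻¹| = (mq : ℝ)⁻¹ := abs_of_pos (by positivity)
  rw [habs]
  calc (mq : ℝ)⁻¹ * opNorm _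
      ≤ (mq : ℝ)⁻¹ * (((mq : ℝ) - 1) * (2 * B / mq) + Real.sqrt Q * M) := by
        exact mul_le_mul_of_nonneg_left hsumnorm (le_of_lt (inv_pos.mpr hNpos))
    _ ≤ (mq : ℝ)⁻¹ * (2 * B + Real.sqrt Q * M) := by
        have h1 : ((mq:ℝ) - 1) * (2 * B / mq) ≤ (mq:ℝ) * (2 * B / mq) :=
          mul_le_mul_of_nonneg_right (by linarith) (by positivity)
        have h2 : (mq:ℝ) * (2 * B / mq) = 2 * B := by field_simp
        apply mul_le_mul_of_nonneg_left _ (le_of_lt (inv_pos.mpr hNpos))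
        linarith
    _ = 2 * B / mq + Real.sqrt Q * M / mq := by
        field_simp
end

section
/- (Lemma 1.) Under the hypotheses of Steps 1 and 2 (stability with constant B, losses valued in [0,M], y_i = q), define H_q(z) := 𝔇(𝓛_q(z)) − 𝔇(L̂_q(z)) ∈ ℝ^{2Q×2Q}, where 𝓛_q(z) = 𝔼_{X∼D_{X|q}} L(A_z, X, q), L̂_q(z) = (1/m_q) Σ_{k: y_k=q} L(A_z, x_k, q), and 𝔇 denotes the self-adjoint dilation. Then for every i with y_i = q, (H_q(z) − H_q(z^i))² ≼ (4B/m_q + √Q·M/m_q)² · I, where I is the 2Q×2Q identity matrix and ≼ is the Loewner order. -/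
open Matrix MeasureTheory ENNReal

/-- The self-adjoint dilation `𝔇(A) = [[0, A], [Aᵀ, 0]]` of a square real matrix. -/
noncomputable def dilation {Q : ℕ} (A : Matrix (Fin Q) (Fin Q) ℝ) :
    Matrix (Fin Q ⊕ Fin Q) (Fin Q ⊕ Fin Q) ℝ :=
  Matrix.fromBlocks 0 A Aᵀ 0

/-- The Loewner (positive semidefinite) order: `S ≼ T` iff `T - S` is PSD. -/
def loewnerLE {n : Type*} [Fintype n] (S T : Matrix n n ℝ) : Prop :=
  (T - S).PosSemidef

section Aux

open scoped Matrix.Norms.L2Operator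

lemma aux_opNorm_eq_norm {n : Type*} [Fintype n] [DecidableEq n] (M : Matrix n n ℝ) :
    opNorm M = ‖M‖ := rfl

lemma aux_euclid_norm_eq {n : Type*} [Fintype n] (v : n → ℝ) :
    ‖((WithLp.equiv 2 (n → ℝ)).symm v : EuclideanSpace ℝ n)‖ = Real.sqrt (∑ i, (v i)^2) := by
  rw [EuclideanSpace.norm_eq]
  congr 1; refine Finset.sum_congr rfl fun i _ => ?_
  simp [sq_abs]

lemma aux_matrix_norm_le {n : Type*} [Fintype n] [DecidableEq n] (A : Matrix n n ℝ) (c : ℝ)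
    (hc : 0 ≤ c)
    (h : ∀ v : EuclideanSpace ℝ n, ‖(WithLp.equiv 2 (n → ℝ)).symm (A *ᵥ v)‖ ≤ c * ‖v‖) :
    ‖A‖ ≤ c := by
  rw [Matrix.cstar_norm_def]
  apply ContinuousLinearMap.opNorm_le_bound _ hc
  intro x
  have hx : Matrix.toEuclideanCLM (𝕜 := ℝ) A x
      = (WithLp.equiv 2 (n → ℝ)).symm (A *ᵥ (WithLp.equiv 2 (n → ℝ) x)) := by
    have := Matrix.ofLp_toEuclideanCLM (𝕜 := ℝ) A x
    exact (WithLp.equiv 2 (n → ℝ)).symm_apply_eq.mpr this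
  rw [hx]
  simpa using h x

lemma aux_norm_mulVec_le {n : Type*} [Fintype n] [DecidableEq n] (A : Matrix n n ℝ)
    (v : n → ℝ) :
    ‖((WithLp.equiv 2 (n → ℝ)).symm (A *ᵥ v) : EuclideanSpace ℝ n)‖
      ≤ ‖A‖ * ‖((WithLp.equiv 2 (n → ℝ)).symm v : EuclideanSpace ℝ n)‖ :=
  A.l2_opNorm_mulVec ((WithLp.equiv 2 (n → ℝ)).symm v)

lemma aux_row_matrix_norm_le {n : Type*} [Fintype n] [DecidableEq n] (A : Matrix n n ℝ) (q : n)
    (M : ℝ) (hM : 0 ≤ M) (hrow : ∀ a b, a ≠ q → A a b = 0) (hent : ∀ b, |A q b| ≤ M) :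
    ‖A‖ ≤ Real.sqrt (Fintype.card n) * M := by
  apply aux_matrix_norm_le _ _ (by positivity)
  intro v
  have hAv : ∀ a, a ≠ q → (A *ᵥ v) a = 0 := by
    intro a ha
    simp [Matrix.mulVec, dotProduct, hrow a _ ha]
  have h1 : ‖(WithLp.equiv 2 (n → ℝ)).symm (A *ᵥ v)‖ = |(A *ᵥ v) q| := by
    rw [aux_euclid_norm_eq, Finset.sum_eq_single q]
    · exact Real.sqrt_sq_eq_abs _
    · intro b _ hb; rw [hAv b hb]; ring
    · simp
  rw [h1]
  have h2 : ((A *ᵥ v) q)^2 ≤ (∑ b, (A q b)^2) * (∑ b, (v b)^2) := by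
    simpa [Matrix.mulVec, dotProduct] using
      Finset.sum_mul_sq_le_sq_mul_sq Finset.univ (fun b => A q b) (fun b => v b)
  have h3 : (∑ b, (A q b)^2) ≤ (Fintype.card n) * M^2 := by
    calc ∑ b, (A q b)^2 ≤ ∑ _b : n, M^2 := by
          refine Finset.sum_le_sum fun b _ => ?_
          rw [← sq_abs]; exact pow_le_pow_left₀ (abs_nonneg _) (hent b) 2
      _ = (Fintype.card n) * M^2 := by simp [Finset.card_univ, mul_comm]
  have hvn : ‖v‖ = Real.sqrt (∑ b, (v b)^2) := by
    simpa using aux_euclid_norm_eq (n := n) (WithLp.equiv 2 (n → ℝ) v)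
  calc |(A *ᵥ v) q| = Real.sqrt (((A *ᵥ v) q)^2) := (Real.sqrt_sq_eq_abs _).symm
    _ ≤ Real.sqrt ((Fintype.card n * M^2) * (∑ b, (v b)^2)) := by
        apply Real.sqrt_le_sqrt
        exact h2.trans (mul_le_mul_of_nonneg_right h3 (by positivity))
    _ = Real.sqrt (Fintype.card n) * M * ‖v‖ := by
        rw [hvn, Real.sqrt_mul (by positivity), Real.sqrt_mul (by positivity),
          Real.sqrt_sq hM]
    _ = _ := by ring

lemma aux_dilation_sub {Q : ℕ} (A B : Matrix (Fin Q) (Fin Q) ℝ) :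
    dilation (A - B) = dilation A - dilation B := by
  ext (a|a) (b|b) <;> simp [dilation, Matrix.fromBlocks]

lemma aux_dilation_isHermitian {Q : ℕ} (A : Matrix (Fin Q) (Fin Q) ℝ) :
    (dilation A).IsHermitian := by
  ext (a|a) (b|b) <;> simp [dilation, Matrix.fromBlocks, Matrix.conjTranspose_apply]

lemma aux_transpose_norm_eq {n : Type*} [Fintype n] [DecidableEq n] (A : Matrix n n ℝ) :
    ‖Aᵀ‖ = ‖A‖ := by
  have : Aᵀ = Aᴴ := by ext a b; simp [Matrix.conjTranspose_apply]
  rw [this, Matrix.l2_opNorm_conjTranspose]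

set_option linter.unnecessarySeqFocus false in
set_option linter.unusedTactic false in
lemma aux_dilation_norm_le {Q : ℕ} (A : Matrix (Fin Q) (Fin Q) ℝ) :
    ‖dilation A‖ ≤ ‖A‖ := by
  apply aux_matrix_norm_le _ _ (norm_nonneg A)
  intro v
  set v₁ : Fin Q → ℝ := fun a => v (Sum.inl a) with hv₁
  set v₂ : Fin Q → ℝ := fun a => v (Sum.inr a) with hv₂
  have hmul : dilation A *ᵥ (v : Fin Q ⊕ Fin Q → ℝ) = Sum.elim (A *ᵥ v₂) (Aᵀ *ᵥ v₁) := by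
    rw [dilation, Matrix.fromBlocks_mulVec]
    congr 1 <;> simp [Matrix.zero_mulVec] <;> rfl
  have hnormsq : ∀ w : Fin Q ⊕ Fin Q → ℝ,
      ‖((WithLp.equiv 2 (Fin Q ⊕ Fin Q → ℝ)).symm w : EuclideanSpace ℝ (Fin Q ⊕ Fin Q))‖^2
        = ((∑ a, (w (Sum.inl a))^2) + ∑ a, (w (Sum.inr a))^2) := by
    intro w
    rw [aux_euclid_norm_eq, Real.sq_sqrt (by positivity), Fintype.sum_sum_type]
  have key : ‖((WithLp.equiv 2 (Fin Q ⊕ Fin Q → ℝ)).symm (dilation A *ᵥ v) :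
        EuclideanSpace ℝ (Fin Q ⊕ Fin Q))‖^2 ≤ (‖A‖ * ‖v‖)^2 := by
    rw [hnormsq]
    have e1 : (∑ a, ((dilation A *ᵥ (v : Fin Q ⊕ Fin Q → ℝ)) (Sum.inl a))^2)
        = ‖((WithLp.equiv 2 (Fin Q → ℝ)).symm (A *ᵥ v₂) : EuclideanSpace ℝ (Fin Q))‖^2 := by
      rw [aux_euclid_norm_eq, Real.sq_sqrt (by positivity)]
      refine Finset.sum_congr rfl fun a _ => by rw [hmul]; rfl
    have e2 : (∑ a, ((dilation A *ᵥ (v : Fin Q ⊕ Fin Q → ℝ)) (Sum.inr a))^2)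
        = ‖((WithLp.equiv 2 (Fin Q → ℝ)).symm (Aᵀ *ᵥ v₁) : EuclideanSpace ℝ (Fin Q))‖^2 := by
      rw [aux_euclid_norm_eq, Real.sq_sqrt (by positivity)]
      refine Finset.sum_congr rfl fun a _ => by rw [hmul]; rfl
    rw [e1, e2]
    have b1 := aux_norm_mulVec_le A v₂
    have b2 := aux_norm_mulVec_le Aᵀ v₁
    rw [aux_transpose_norm_eq] at b2
    have hv2 : ‖((WithLp.equiv 2 (Fin Q → ℝ)).symm v₂ : EuclideanSpace ℝ (Fin Q))‖^2
        + ‖((WithLp.equiv 2 (Fin Q → ℝ)).symm v₁ : EuclideanSpace ℝ (Fin Q))‖^2 = ‖v‖^2 := by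
      rw [aux_euclid_norm_eq, aux_euclid_norm_eq, Real.sq_sqrt (by positivity),
        Real.sq_sqrt (by positivity)]
      have : ‖v‖ = ‖((WithLp.equiv 2 (Fin Q ⊕ Fin Q → ℝ)).symm (v : Fin Q ⊕ Fin Q → ℝ) :
          EuclideanSpace ℝ (Fin Q ⊕ Fin Q))‖ := rfl
      rw [this, hnormsq]
      ring
    calc ‖((WithLp.equiv 2 (Fin Q → ℝ)).symm (A *ᵥ v₂) : EuclideanSpace ℝ (Fin Q))‖^2
          + ‖((WithLp.equiv 2 (Fin Q → ℝ)).symm (Aᵀ *ᵥ v₁) : EuclideanSpace ℝ (Fin Q))‖^2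
        ≤ (‖A‖ * ‖((WithLp.equiv 2 (Fin Q → ℝ)).symm v₂ : EuclideanSpace ℝ (Fin Q))‖)^2
          + (‖A‖ * ‖((WithLp.equiv 2 (Fin Q → ℝ)).symm v₁ : EuclideanSpace ℝ (Fin Q))‖)^2 := by
          have := sq_le_sq' (by linarith [norm_nonneg ((WithLp.equiv 2 (Fin Q → ℝ)).symm (A *ᵥ v₂) : EuclideanSpace ℝ (Fin Q))]) b1
          have := sq_le_sq' (by linarith [norm_nonneg ((WithLp.equiv 2 (Fin Q → ℝ)).symm (Aᵀ *ᵥ v₁) : EuclideanSpace ℝ (Fin Q))]) b2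
          linarith
      _ = (‖A‖ * ‖v‖)^2 := by rw [mul_pow, mul_pow, mul_pow, ← mul_add, hv2]
  have h0 : (0:ℝ) ≤ ‖A‖ * ‖v‖ := by positivity
  nlinarith [norm_nonneg ((WithLp.equiv 2 (Fin Q ⊕ Fin Q → ℝ)).symm (dilation A *ᵥ v) :
    EuclideanSpace ℝ (Fin Q ⊕ Fin Q))]

lemma aux_psd_of_norm_le {n : Type*} [Fintype n] [DecidableEq n] (S : Matrix n n ℝ)
    (hS : S.IsHermitian) (c : ℝ) (hc : ‖S‖ ≤ c) :
    (c^2 • (1 : Matrix n n ℝ) - S^2).PosSemidef := by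
  have hc0 : 0 ≤ c := (norm_nonneg S).trans hc
  refine Matrix.PosSemidef.of_dotProduct_mulVec_nonneg ?_ ?_
  · have h2 := hS.pow 2
    rw [Matrix.IsHermitian] at h2 ⊢
    rw [Matrix.conjTranspose_sub, h2]
    congr 1
    simp
  · intro x
    have hST : Sᵀ = S := by
      calc Sᵀ = Sᴴ := by ext a b; simp [Matrix.conjTranspose_apply]
        _ = S := hS
    have hsx : star x = x := by simp
    rw [hsx]
    have hmv : (c^2 • (1 : Matrix n n ℝ) - S^2) *ᵥ x = c^2 • x - S *ᵥ (S *ᵥ x) := by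
      rw [Matrix.sub_mulVec, Matrix.smul_mulVec, Matrix.one_mulVec,
        Matrix.mulVec_mulVec, ← pow_two]
    rw [hmv, dotProduct_sub, dotProduct_smul]
    have hdot : ∀ w : n → ℝ, w ⬝ᵥ w = ∑ i, (w i)^2 := by
      intro w; simp [dotProduct, pow_two]
    have hq : x ⬝ᵥ (S *ᵥ (S *ᵥ x)) = (S *ᵥ x) ⬝ᵥ (S *ᵥ x) := by
      rw [dotProduct_mulVec, ← Matrix.mulVec_transpose, hST]
    rw [hq]
    have hb : (S *ᵥ x) ⬝ᵥ (S *ᵥ x) ≤ c^2 * (x ⬝ᵥ x) := by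
      have h1 := aux_norm_mulVec_le S x
      have h2 : ‖((WithLp.equiv 2 (n → ℝ)).symm (S *ᵥ x) : EuclideanSpace ℝ n)‖^2
          = (S *ᵥ x) ⬝ᵥ (S *ᵥ x) := by
        rw [aux_euclid_norm_eq, Real.sq_sqrt (by positivity), hdot]
      have h3 : ‖((WithLp.equiv 2 (n → ℝ)).symm x : EuclideanSpace ℝ n)‖^2 = x ⬝ᵥ x := by
        rw [aux_euclid_norm_eq, Real.sq_sqrt (by positivity), hdot]
      have h4 : ‖((WithLp.equiv 2 (n → ℝ)).symm (S *ᵥ x) : EuclideanSpace ℝ n)‖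
          ≤ c * ‖((WithLp.equiv 2 (n → ℝ)).symm x : EuclideanSpace ℝ n)‖ :=
        h1.trans (mul_le_mul_of_nonneg_right hc (norm_nonneg _))
      have h5 := pow_le_pow_left₀ (norm_nonneg _) h4 2
      rw [h2, mul_pow, h3] at h5
      exact h5
    simp only [smul_eq_mul]
    linarith

lemma aux_integral_matrix_norm_le {𝒳 : Type*} [MeasurableSpace 𝒳] {n : Type*} [Fintype n]
    [DecidableEq n] (μ : Measure 𝒳) [IsProbabilityMeasure μ] (f : 𝒳 → Matrix n n ℝ)
    (hint : ∀ a b, Integrable (fun t => f t a b) μ) (c : ℝ) (hc : 0 ≤ c)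
    (hb : ∀ t, ‖f t‖ ≤ c) :
    ‖(Matrix.of fun a b => ∫ t, f t a b ∂μ : Matrix n n ℝ)‖ ≤ c := by
  apply aux_matrix_norm_le _ _ hc
  intro v
  set g : 𝒳 → EuclideanSpace ℝ n :=
    fun t => (WithLp.equiv 2 (n → ℝ)).symm (f t *ᵥ (v : n → ℝ)) with hg
  have hgint : Integrable g μ := by
    have hge : g = fun t => ∑ a, ∑ b, (f t a b * v b) •
        ((WithLp.equiv 2 (n → ℝ)).symm (Pi.single a 1) : EuclideanSpace ℝ n) := by
      funext t
      ext a'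
      have : (∑ a, ∑ b, (f t a b * v b) •
          ((WithLp.equiv 2 (n → ℝ)).symm (Pi.single a 1) : EuclideanSpace ℝ n)) a'
          = ∑ a, ∑ b, (f t a b * v b) * ((Pi.single a 1 : n → ℝ) a') := by
        rw [WithLp.ofLp_sum, Finset.sum_apply]
        refine Finset.sum_congr rfl fun a _ => ?_
        rw [WithLp.ofLp_sum, Finset.sum_apply]
        rfl
      rw [this, Finset.sum_comm]
      simp [hg, Matrix.mulVec, dotProduct, Pi.single_apply, mul_ite,
        Finset.sum_ite_eq']
    rw [hge]
    exact integrable_finset_sum _ fun a _ => integrable_finset_sum _ fun b _ =>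
      ((hint a b).mul_const (v b)).smul_const _
  have hcomp : ((WithLp.equiv 2 (n → ℝ)).symm
        ((Matrix.of fun a b => ∫ t, f t a b ∂μ : Matrix n n ℝ) *ᵥ (v : n → ℝ))
        : EuclideanSpace ℝ n) = ∫ t, g t ∂μ := by
    ext a
    have h1 : (∫ t, g t ∂μ) a = EuclideanSpace.proj a (∫ t, g t ∂μ) := rfl
    rw [h1, ← ContinuousLinearMap.integral_comp_comm _ hgint]
    have h2 : (fun t => EuclideanSpace.proj a (g t)) = fun t => ∑ b, f t a b * v b := by
      funext t
      simp [hg, Matrix.mulVec, dotProduct, EuclideanSpace.proj]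
    rw [h2]
    have h3 : ((Matrix.of fun a b => ∫ t, f t a b ∂μ : Matrix n n ℝ) *ᵥ (v : n → ℝ)) a
        = ∑ b, (∫ t, f t a b ∂μ) * v b := by
      simp [Matrix.mulVec, dotProduct]
    show ((Matrix.of fun a b => ∫ t, f t a b ∂μ : Matrix n n ℝ) *ᵥ (v : n → ℝ)) a
        = ∫ t, ∑ b, f t a b * v b ∂μ
    rw [h3, integral_finset_sum _ fun b _ => (hint a b).mul_const (v b)]
    refine Finset.sum_congr rfl fun b _ => ?_
    rw [MeasureTheory.integral_mul_const]
  rw [hcomp]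
  have hbound : ∀ t, ‖g t‖ ≤ c * ‖v‖ := by
    intro t
    have := aux_norm_mulVec_le (f t) (v : n → ℝ)
    have hv : ((WithLp.equiv 2 (n → ℝ)).symm (v : n → ℝ) : EuclideanSpace ℝ n) = v := rfl
    rw [hv] at this
    exact this.trans (mul_le_mul_of_nonneg_right (hb t) (norm_nonneg v))
  calc ‖∫ t, g t ∂μ‖ ≤ ∫ _, c * ‖v‖ ∂μ :=
        norm_integral_le_of_norm_le (integrable_const _) (Filter.Eventually.of_forall hbound)
    _ = c * ‖v‖ := by simp

end Aux

open scoped Matrix.Norms.L2Operator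

/-- **Lemma 1.** With `H_q(z) = 𝔇(𝓛_q(z)) − 𝔇(L̂_q(z))`, under the stability and
boundedness hypotheses, `(H_q(z) − H_q(z^i))² ≼ (4B/m_q + √Q·M/m_q)² · I`. -/
theorem statement7 {𝒳 ℋ : Type*} [MeasurableSpace 𝒳] {Q m : ℕ}
    (ℓ : Fin Q → ℋ → 𝒳 → Fin Q → ℝ)
    (A : List (𝒳 × Fin Q) → ℋ)
    (D : Fin Q → Measure 𝒳) [∀ q, IsProbabilityMeasure (D q)]
    (y : Fin m → Fin Q) (x : Fin m → 𝒳) (x' : 𝒳)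
    (q : Fin Q) (i : Fin m) (hyi : y i = q)
    (B : ℝ) (hB : 0 < B) (M : ℝ) (hM : 0 ≤ M)
    (hloss : ∀ (j : Fin Q) (h : ℋ) (x0 : 𝒳) (y0 : Fin Q), ℓ j h x0 y0 ∈ Set.Icc (0 : ℝ) M)
    (mq : ℕ) (hmq : mq = (Finset.univ.filter fun j => y j = q).card) (hmq1 : 1 ≤ mq)
    (z zi zbs : List (𝒳 × Fin Q))
    (hz : z = List.ofFn fun j => (x j, y j))
    (hzi : zi = z.set i (x', q))
    (hzbs : zbs = z.eraseIdx i)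
    (hstab : ∀ x0 : 𝒳,
      opNorm (lossMatrix ℓ (A z) x0 q - lossMatrix ℓ (A zbs) x0 q) ≤ B / mq)
    (hstab' : ∀ x0 : 𝒳,
      opNorm (lossMatrix ℓ (A zi) x0 q - lossMatrix ℓ (A zbs) x0 q) ≤ B / mq)
    (hint : ∀ a b, Integrable (fun t => lossMatrix ℓ (A z) t q a b) (D q))
    (hint' : ∀ a b, Integrable (fun t => lossMatrix ℓ (A zi) t q a b) (D q))
    -- `H_q` evaluated at the sample `z` and at the perturbed sample `z^i`
    (Hz Hzi : Matrix (Fin Q ⊕ Fin Q) (Fin Q ⊕ Fin Q) ℝ)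
    (hHz : Hz = dilation (Matrix.of fun a b => ∫ t, lossMatrix ℓ (A z) t q a b ∂(D q)) -
        dilation ((mq : ℝ)⁻¹ • ∑ k ∈ Finset.univ.filter (fun k => y k = q),
          lossMatrix ℓ (A z) (x k) q))
    (hHzi : Hzi = dilation (Matrix.of fun a b => ∫ t, lossMatrix ℓ (A zi) t q a b ∂(D q)) -
        dilation ((mq : ℝ)⁻¹ • ((∑ k ∈ (Finset.univ.filter fun k => y k = q).erase i,
          lossMatrix ℓ (A zi) (x k) q) + lossMatrix ℓ (A zi) x' q))) :
    loewnerLE ((Hz - Hzi) ^ 2)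
      ((4 * B / mq + Real.sqrt Q * M / mq) ^ 2 • (1 : Matrix (Fin Q ⊕ Fin Q) (Fin Q ⊕ Fin Q) ℝ)) := by
  classical
  have hmqpos : (0:ℝ) < (mq:ℝ) := by exact_mod_cast hmq1
  have hBmq : (0:ℝ) ≤ B / mq := by positivity
  set F := Finset.univ.filter (fun k : Fin m => y k = q) with hF
  have hiF : i ∈ F := by simp [hF, hyi]
  -- stability in norm form
  have hstabn : ∀ x0, ‖lossMatrix ℓ (A z) x0 q - lossMatrix ℓ (A zbs) x0 q‖ ≤ B / mq :=
    fun x0 => by rw [← aux_opNorm_eq_norm]; exact hstab x0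
  have hstabn' : ∀ x0, ‖lossMatrix ℓ (A zi) x0 q - lossMatrix ℓ (A zbs) x0 q‖ ≤ B / mq :=
    fun x0 => by rw [← aux_opNorm_eq_norm]; exact hstab' x0
  have htri : ∀ t, ‖lossMatrix ℓ (A z) t q - lossMatrix ℓ (A zi) t q‖ ≤ 2 * B / mq := by
    intro t
    have he : lossMatrix ℓ (A z) t q - lossMatrix ℓ (A zi) t q
        = (lossMatrix ℓ (A z) t q - lossMatrix ℓ (A zbs) t q)
          - (lossMatrix ℓ (A zi) t q - lossMatrix ℓ (A zbs) t q) := by abel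
    rw [he]
    calc ‖_ - _‖ ≤ ‖lossMatrix ℓ (A z) t q - lossMatrix ℓ (A zbs) t q‖
          + ‖lossMatrix ℓ (A zi) t q - lossMatrix ℓ (A zbs) t q‖ := norm_sub_le _ _
      _ ≤ B / mq + B / mq := add_le_add (hstabn t) (hstabn' t)
      _ = 2 * B / mq := by ring
  -- abbreviations
  set Iz := (Matrix.of fun a b => ∫ t, lossMatrix ℓ (A z) t q a b ∂(D q)) with hIz
  set Izi := (Matrix.of fun a b => ∫ t, lossMatrix ℓ (A zi) t q a b ∂(D q)) with hIzi
  set Ez := ((mq : ℝ)⁻¹ • ∑ k ∈ F, lossMatrix ℓ (A z) (x k) q) with hEz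
  set Ezi := ((mq : ℝ)⁻¹ • ((∑ k ∈ F.erase i, lossMatrix ℓ (A zi) (x k) q)
    + lossMatrix ℓ (A zi) x' q)) with hEzi
  have hS : Hz - Hzi = dilation ((Iz - Izi) - (Ez - Ezi)) := by
    rw [hHz, hHzi]
    simp only [aux_dilation_sub]
    abel
  -- bound on the integral part
  have hIbound : ‖Iz - Izi‖ ≤ 2 * B / mq := by
    have he : Iz - Izi = Matrix.of fun a b =>
        ∫ t, (lossMatrix ℓ (A z) t q - lossMatrix ℓ (A zi) t q) a b ∂(D q) := by
      ext a b
      simp only [hIz, hIzi, Matrix.sub_apply, Matrix.of_apply]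
      rw [← integral_sub (hint a b) (hint' a b)]
    rw [he]
    apply aux_integral_matrix_norm_le (D q)
      (fun t => lossMatrix ℓ (A z) t q - lossMatrix ℓ (A zi) t q)
      (fun a b => by exact (hint a b).sub (hint' a b)) _ (by positivity) htri
  -- bound on the single-example part
  have hsingle : ‖lossMatrix ℓ (A z) (x i) q - lossMatrix ℓ (A zi) x' q‖
      ≤ Real.sqrt Q * M := by
    have := aux_row_matrix_norm_le
      (lossMatrix ℓ (A z) (x i) q - lossMatrix ℓ (A zi) x' q) q M hM
      (fun a b ha => by simp [lossMatrix, ha])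
      (fun b => by
        simp only [lossMatrix, Matrix.sub_apply, Matrix.of_apply]
        split_ifs with h
        · obtain ⟨h1, h2⟩ := hloss b (A z) (x i) q
          obtain ⟨h3, h4⟩ := hloss b (A zi) x' q
          rw [abs_le]; constructor <;> linarith
        · simpa using hM)
    simpa [Fintype.card_fin] using this
  -- bound on the empirical part
  have hEdiff : Ez - Ezi = (mq : ℝ)⁻¹ •
      ((∑ k ∈ F.erase i, (lossMatrix ℓ (A z) (x k) q - lossMatrix ℓ (A zi) (x k) q))
        + (lossMatrix ℓ (A z) (x i) q - lossMatrix ℓ (A zi) x' q)) := by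
    rw [hEz, hEzi, ← smul_sub]
    congr 1
    rw [← Finset.add_sum_erase F _ hiF, Finset.sum_sub_distrib]
    abel
  have hEbound : ‖Ez - Ezi‖ ≤ 2 * B / mq + Real.sqrt Q * M / mq := by
    rw [hEdiff, norm_smul, Real.norm_eq_abs, abs_of_nonneg (by positivity)]
    have hsumb : ‖∑ k ∈ F.erase i, (lossMatrix ℓ (A z) (x k) q - lossMatrix ℓ (A zi) (x k) q)‖
        ≤ ((F.erase i).card : ℝ) * (2 * B / mq) := by
      calc ‖_‖ ≤ ∑ k ∈ F.erase i,
            ‖lossMatrix ℓ (A z) (x k) q - lossMatrix ℓ (A zi) (x k) q‖ := norm_sum_le _ _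
        _ ≤ ∑ _k ∈ F.erase i, (2 * B / mq) := Finset.sum_le_sum fun k _ => htri (x k)
        _ = ((F.erase i).card : ℝ) * (2 * B / mq) := by
            rw [Finset.sum_const, nsmul_eq_mul]
    have hcard : ((F.erase i).card : ℝ) ≤ (mq : ℝ) := by
      have : (F.erase i).card ≤ F.card := Finset.card_erase_le
      exact_mod_cast this.trans (le_of_eq hmq.symm)
    have hin : ‖(∑ k ∈ F.erase i, (lossMatrix ℓ (A z) (x k) q - lossMatrix ℓ (A zi) (x k) q))
        + (lossMatrix ℓ (A z) (x i) q - lossMatrix ℓ (A zi) x' q)‖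
        ≤ (mq : ℝ) * (2 * B / mq) + Real.sqrt Q * M := by
      calc ‖_ + _‖ ≤ _ + _ := norm_add_le _ _
        _ ≤ ((F.erase i).card : ℝ) * (2 * B / mq) + Real.sqrt Q * M :=
            add_le_add hsumb hsingle
        _ ≤ (mq : ℝ) * (2 * B / mq) + Real.sqrt Q * M := by
            have h2B : (0:ℝ) ≤ 2 * B / mq := by positivity
            nlinarith
    calc (mq : ℝ)⁻¹ * ‖_‖ ≤ (mq : ℝ)⁻¹ * ((mq : ℝ) * (2 * B / mq) + Real.sqrt Q * M) :=
          mul_le_mul_of_nonneg_left hin (by positivity)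
      _ = 2 * B / mq + Real.sqrt Q * M / mq := by
          field_simp
  -- total norm bound
  have hnorm : ‖Hz - Hzi‖ ≤ 4 * B / mq + Real.sqrt Q * M / mq := by
    rw [hS]
    calc ‖dilation ((Iz - Izi) - (Ez - Ezi))‖ ≤ ‖(Iz - Izi) - (Ez - Ezi)‖ :=
          aux_dilation_norm_le _
      _ ≤ ‖Iz - Izi‖ + ‖Ez - Ezi‖ := norm_sub_le _ _
      _ ≤ 2 * B / mq + (2 * B / mq + Real.sqrt Q * M / mq) := add_le_add hIbound hEbound
      _ = 4 * B / mq + Real.sqrt Q * M / mq := by ring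
  -- Hermitian
  have hHerm : (Hz - Hzi).IsHermitian := by
    rw [hHz, hHzi]
    exact ((aux_dilation_isHermitian _).sub (aux_dilation_isHermitian _)).sub
      ((aux_dilation_isHermitian _).sub (aux_dilation_isHermitian _))
  exact aux_psd_of_norm_le (Hz - Hzi) hHerm _ hnorm
end

section
/- (Lemma 5.) Consider the Lee–Lin–Wahba multiclass SVM: ℋ is an RKHS of real functions on 𝒳 with k(x,x) ≤ κ², and h* ∈ ℋ^Q minimizes J(h) = (1/m) Σ_{k=1}^m Σ_{q ≠ y_k} (h_q(x_k) + 1/(Q−1))₊ + λ Σ_{q=1}^Q ‖h_q‖², where (u)₊ = max(u, 0). Then for the class-wise losses ℓ_q(h, x, y) = Σ_{p ≠ q} (h_p(x) + 1/(Q−1))₊, one has for all x ∈ 𝒳, y ∈ 𝒴, and q ∈ {1,…,Q}: ℓ_q(h*, x, y) ≤ Qκ/√λ + 1. -/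
open scoped RealInnerProductSpace

/-- **Lemma 5 (Lee–Lin–Wahba).** If `h*` minimizes the LLW objective
`J(h) = (1/m) Σ_k Σ_{q ≠ y_k} (h_q(x_k) + 1/(Q−1))₊ + λ Σ_q ‖h_q‖²` over an RKHS with
`k(x,x) ≤ κ²` (reproducing elements `K x` with `‖K x‖ ≤ κ`, evaluation
`h_q(x) = ⟪K x, h q⟫`), then the class-wise losses
`ℓ_q(h*, x, y) = Σ_{p ≠ q} (h*_p(x) + 1/(Q−1))₊` satisfy
`ℓ_q(h*, x, y) ≤ Qκ/√λ + 1` for all `x`, `y`, `q`. -/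
theorem statement16 {𝒳 ℋ₀ : Type*} [NormedAddCommGroup ℋ₀] [InnerProductSpace ℝ ℋ₀]
    {Q m : ℕ} (hQ : 2 ≤ Q) (hm : 0 < m)
    (K : 𝒳 → ℋ₀) (κ : ℝ) (hκ : 0 ≤ κ) (hK : ∀ x, ‖K x‖ ≤ κ)
    (lam : ℝ) (hlam : 0 < lam)
    (x : Fin m → 𝒳) (yv : Fin m → Fin Q)
    (hstar : Fin Q → ℋ₀)
    (hmin : IsMinOn
      (fun h : Fin Q → ℋ₀ =>
        (m : ℝ)⁻¹ * ∑ k : Fin m, ∑ q ∈ Finset.univ.erase (yv k),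
          max (⟪K (x k), h q⟫ + ((Q : ℝ) - 1)⁻¹) 0 +
        lam * ∑ q, ‖h q‖ ^ 2)
      Set.univ hstar) :
    ∀ (x0 : 𝒳) (y0 q : Fin Q),
      (∑ p ∈ Finset.univ.erase q, max (⟪K x0, hstar p⟫ + ((Q : ℝ) - 1)⁻¹) 0)
        ≤ Q * κ / Real.sqrt lam + 1 := by
  intro x0 y0 q
  have hQ1 : (1:ℝ) ≤ (Q:ℝ) - 1 := by
    have : (2:ℝ) ≤ (Q:ℝ) := by exact_mod_cast hQ
    linarith
  have hQ1pos : (0:ℝ) < (Q:ℝ) - 1 := by linarith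
  -- J(hstar) ≤ J(0) = 1
  have hJ0 := hmin (Set.mem_univ (0 : Fin Q → ℋ₀))
  simp only [Set.mem_setOf_eq, Pi.zero_apply, inner_zero_right, zero_add, norm_zero] at hJ0
  have hcard : ∀ r : Fin Q, (Finset.univ.erase r).card = Q - 1 := by
    intro r
    rw [Finset.card_erase_of_mem (Finset.mem_univ r), Finset.card_univ, Fintype.card_fin]
  have hmaxQ : max (((Q:ℝ) - 1)⁻¹) 0 = ((Q:ℝ) - 1)⁻¹ := by
    exact max_eq_left (by positivity)
  have hm' : (m:ℝ) ≠ 0 := Nat.cast_ne_zero.mpr hm.ne'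
  have hJ0val : ((m : ℝ)⁻¹ * ∑ k : Fin m, ∑ q ∈ Finset.univ.erase (yv k),
      max (((Q : ℝ) - 1)⁻¹) 0 + lam * ∑ q : Fin Q, ((0:ℝ)) ^ 2) = 1 := by
    simp only [hmaxQ, Finset.sum_const, hcard, nsmul_eq_mul]
    have hq1 : ((Q - 1 : ℕ) : ℝ) = (Q:ℝ) - 1 := by
      have : (1:ℕ) ≤ Q := by omega
      push_cast [this]; ring
    rw [hq1, mul_inv_cancel₀ (ne_of_gt hQ1pos)]
    simp [Finset.card_univ, hm', inv_mul_cancel₀]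
  have hJle : lam * ∑ p : Fin Q, ‖hstar p‖ ^ 2 ≤ 1 := by
    have hnonneg : 0 ≤ (m : ℝ)⁻¹ * ∑ k : Fin m, ∑ p ∈ Finset.univ.erase (yv k),
        max (⟪K (x k), hstar p⟫ + ((Q : ℝ) - 1)⁻¹) 0 := by
      apply mul_nonneg (by positivity)
      apply Finset.sum_nonneg; intro k _
      apply Finset.sum_nonneg; intro p _
      exact le_max_right _ _
    have h2 : ((m : ℝ)⁻¹ * ∑ k : Fin m, ∑ p ∈ Finset.univ.erase (yv k),
        max (⟪K (x k), hstar p⟫ + ((Q : ℝ) - 1)⁻¹) 0 +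
        lam * ∑ p : Fin Q, ‖hstar p‖ ^ 2)
        ≤ ((m : ℝ)⁻¹ * ∑ k : Fin m, ∑ p ∈ Finset.univ.erase (yv k),
        max (((Q : ℝ) - 1)⁻¹) 0 + lam * ∑ p : Fin Q, ((0:ℝ)) ^ 2) := hJ0
    rw [hJ0val] at h2
    linarith
  -- each ‖hstar p‖ ≤ 1/√lam
  have hnorm : ∀ p : Fin Q, ‖hstar p‖ ≤ 1 / Real.sqrt lam := by
    intro p
    have hsq : ‖hstar p‖ ^ 2 ≤ 1 / lam := by
      have hle : ‖hstar p‖ ^ 2 ≤ ∑ r : Fin Q, ‖hstar r‖ ^ 2 :=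
        Finset.single_le_sum (f := fun r => ‖hstar r‖ ^ 2)
          (fun r _ => by positivity) (Finset.mem_univ p)
      rw [le_div_iff₀ hlam]
      nlinarith
    have h1 : ‖hstar p‖ ≤ Real.sqrt (1 / lam) := by
      rw [← Real.sqrt_sq (norm_nonneg (hstar p))]
      exact Real.sqrt_le_sqrt hsq
    rwa [one_div, Real.sqrt_inv, ← one_div] at h1
  -- each term bound
  have hterm : ∀ p : Fin Q, max (⟪K x0, hstar p⟫ + ((Q : ℝ) - 1)⁻¹) 0
      ≤ κ / Real.sqrt lam + ((Q:ℝ) - 1)⁻¹ := by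
    intro p
    have hinner : ⟪K x0, hstar p⟫ ≤ κ / Real.sqrt lam := by
      calc ⟪K x0, hstar p⟫ ≤ ‖K x0‖ * ‖hstar p‖ := real_inner_le_norm _ _
        _ ≤ κ * (1 / Real.sqrt lam) := by
            apply mul_le_mul (hK x0) (hnorm p) (norm_nonneg _) hκ
        _ = κ / Real.sqrt lam := by ring
    apply max_le
    · have : ((Q:ℝ) - 1)⁻¹ ≤ ((Q:ℝ) - 1)⁻¹ := le_refl _
      linarith
    · positivity
  calc (∑ p ∈ Finset.univ.erase q, max (⟪K x0, hstar p⟫ + ((Q : ℝ) - 1)⁻¹) 0)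
      ≤ ∑ p ∈ Finset.univ.erase q, (κ / Real.sqrt lam + ((Q:ℝ) - 1)⁻¹) :=
        Finset.sum_le_sum (fun p _ => hterm p)
    _ = ((Q:ℝ) - 1) * (κ / Real.sqrt lam + ((Q:ℝ) - 1)⁻¹) := by
        rw [Finset.sum_const, hcard, nsmul_eq_mul]
        congr 1
        have : (1:ℕ) ≤ Q := by omega
        push_cast [this]; ring
    _ = ((Q:ℝ) - 1) * (κ / Real.sqrt lam) + 1 := by
        rw [mul_add, mul_inv_cancel₀ (ne_of_gt hQ1pos)]
    _ ≤ (Q:ℝ) * (κ / Real.sqrt lam) + 1 := by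
        have : 0 ≤ κ / Real.sqrt lam := by positivity
        nlinarith
    _ = Q * κ / Real.sqrt lam + 1 := by ring
end
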